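/- If f is a positive r-convex function on [a,b] (r ≠ 0) with f(a) ≠ f(b) and f integrable, then (1/(b-a)) ∫_a^b f(x) dx ≤ (r/(r+1))·(f(a)^{r+1} − f(b)^{r+1})/(f(a)^r − f(b)^r) when r ≠ -1, and ≤ f(a)f(b)·(ln f(a) − ln f(b))/(f(a) − f(b)) when r = -1. -/

import Mathlib

theorem r_convex_gill (f : ℝ → ℝ) (r a b : ℝ) (hr : r ≠ 0) (hab : a < b)
    (hpos : ∀ x ∈ Set.Icc a b, 0 < f x)
    (hconv : ∀ x ∈ Set.Icc a b, ∀ y ∈ Set.Icc a b, ∀ l ∈ Set.Icc (0:ℝ) 1,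
      f (l * x + (1 - l) * y) ≤ (l * f x ^ r + (1 - l) * f y ^ r) ^ (1 / r))
    (hne : f a ≠ f b)
    (hint : IntervalIntegrable f MeasureTheory.volume a b) :
    (r ≠ -1 →
      (1 / (b - a)) * ∫ x in a..b, f x ≤
        (r / (r + 1)) * ((f a ^ (r + 1) - f b ^ (r + 1)) / (f a ^ r - f b ^ r))) ∧
    (r = -1 →
      (1 / (b - a)) * ∫ x in a..b, f x ≤
        f a * f b * ((Real.log (f a) - Real.log (f b)) / (f a - f b))) := by
  have ha : a ∈ Set.Icc a b := ⟨le_refl a, hab.le⟩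
  have hb : b ∈ Set.Icc a b := ⟨hab.le, le_refl b⟩
  have hfa : 0 < f a := hpos a ha
  have hfb : 0 < f b := hpos b hb
  have hba : (0:ℝ) < b - a := sub_pos.mpr hab
  set A := f a ^ r with hA
  set B := f b ^ r with hB
  have hApos : 0 < A := Real.rpow_pos_of_pos hfa r
  have hBpos : 0 < B := Real.rpow_pos_of_pos hfb r
  have hAB : A ≠ B := by
    intro h
    apply hne
    have h2 : A ^ (1/r) = B ^ (1/r) := by rw [h]
    rwa [hA, hB, ← Real.rpow_mul hfa.le, ← Real.rpow_mul hfb.le,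
      mul_one_div_cancel hr, Real.rpow_one, Real.rpow_one] at h2
  set k : ℝ := (B - A) / (b - a) with hk
  have hkne : k ≠ 0 := div_ne_zero (sub_ne_zero.mpr (Ne.symm hAB)) hba.ne'
  set u : ℝ → ℝ := fun x => A + (x - a) * k with hu
  set g : ℝ → ℝ := fun x => u x ^ (1/r) with hg
  have hupos : ∀ x ∈ Set.Icc a b, 0 < u x := by
    intro x hx
    have h1 : u x = ((b-x)/(b-a)) * A + ((x-a)/(b-a)) * B := by
      simp only [hu, hk]; field_simp; ring
    rw [h1]
    have h2 : 0 ≤ (b-x)/(b-a) := div_nonneg (by linarith [hx.2]) hba.le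
    have h3 : 0 ≤ (x-a)/(b-a) := div_nonneg (by linarith [hx.1]) hba.le
    have h4 : (b-x)/(b-a) + (x-a)/(b-a) = 1 := by field_simp; ring
    have hm : 0 < min A B := lt_min hApos hBpos
    nlinarith [mul_le_mul_of_nonneg_left (min_le_left A B) h2,
      mul_le_mul_of_nonneg_left (min_le_right A B) h3]
  have hfg : ∀ x ∈ Set.Icc a b, f x ≤ g x := by
    intro x hx
    have hl : (b - x)/(b-a) ∈ Set.Icc (0:ℝ) 1 :=
      ⟨div_nonneg (by linarith [hx.2]) hba.le, by
        rw [div_le_one hba]; linarith [hx.1]⟩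
    have h := hconv a ha b hb _ hl
    have hx' : ((b-x)/(b-a)) * a + (1 - (b-x)/(b-a)) * b = x := by
      field_simp; ring
    rw [hx'] at h
    have h2 : ((b-x)/(b-a)) * f a ^ r + (1 - (b-x)/(b-a)) * f b ^ r = u x := by
      simp only [hu, hk, ← hA, ← hB]; field_simp; ring
    rwa [h2] at h
  have hucont : Continuous u := by fun_prop
  have hgcont : ContinuousOn g (Set.Icc a b) := by
    intro x hx
    exact (Real.continuousAt_rpow_const (u x) (1/r)
      (Or.inl (hupos x hx).ne')).comp hucont.continuousAt |>.continuousWithinAt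
  have hgint : IntervalIntegrable g MeasureTheory.volume a b := by
    apply ContinuousOn.intervalIntegrable
    rwa [Set.uIcc_of_le hab.le]
  have hle : ∫ x in a..b, f x ≤ ∫ x in a..b, g x :=
    intervalIntegral.integral_mono_on hab.le hint hgint hfg
  have huderiv : ∀ x : ℝ, HasDerivAt u k x := by
    intro x
    simpa [hu] using (((hasDerivAt_id x).sub_const a).mul_const k).const_add A
  have hub : u b = B := by simp only [hu, hk]; field_simp; ring
  have hua : u a = A := by simp [hu]
  constructor
  · intro hr1
    have hr1' : r + 1 ≠ 0 := by intro h; apply hr1; linarith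
    set C : ℝ := r / ((r + 1) * k) with hC
    set F : ℝ → ℝ := fun x => C * u x ^ ((r+1)/r) with hF
    have hFderiv : ∀ x ∈ Set.Icc a b, HasDerivAt F (g x) x := by
      intro x hx
      have h1 : HasDerivAt (fun y : ℝ => y ^ ((r+1)/r)) (((r+1)/r) * u x ^ ((r+1)/r - 1)) (u x) :=
        Real.hasDerivAt_rpow_const (Or.inl (hupos x hx).ne')
      have h2 := (h1.comp x (huderiv x)).const_mul C
      have h3 : C * (((r+1)/r) * u x ^ ((r+1)/r - 1) * k) = g x := by
        have he : (r+1)/r - 1 = 1/r := by field_simp; ring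
        rw [he]
        simp only [hg, hC]
        field_simp
      rwa [h3] at h2
    have hcalc : ∫ x in a..b, g x = F b - F a := by
      apply intervalIntegral.integral_eq_sub_of_hasDerivAt
      · intro x hx
        rw [Set.uIcc_of_le hab.le] at hx
        exact hFderiv x hx
      · exact hgint
    have hAr : A ^ ((r+1)/r) = f a ^ (r+1) := by
      rw [hA, ← Real.rpow_mul hfa.le]
      congr 1
      field_simp
    have hBr : B ^ ((r+1)/r) = f b ^ (r+1) := by
      rw [hB, ← Real.rpow_mul hfb.le]
      congr 1
      field_simp
    have hval : F b - F a = C * (f b ^ (r+1) - f a ^ (r+1)) := by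
      simp only [hF, hub, hua, hAr, hBr]; ring
    have hBA : B - A ≠ 0 := sub_ne_zero.mpr (Ne.symm hAB)
    have hABs : A - B ≠ 0 := sub_ne_zero.mpr hAB
    have hC2 : C = r * (b - a) / ((r+1) * (B - A)) := by
      rw [hC, hk]
      field_simp
    have hfinal : (1/(b-a)) * (F b - F a)
        = (r/(r+1)) * ((f a ^ (r+1) - f b ^ (r+1)) / (A - B)) := by
      rw [hval, hC2]
      field_simp
      ring
    calc (1/(b-a)) * ∫ x in a..b, f x
        ≤ (1/(b-a)) * ∫ x in a..b, g x := by
          apply mul_le_mul_of_nonneg_left hle (by positivity)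
      _ = (r/(r+1)) * ((f a ^ (r+1) - f b ^ (r+1)) / (A - B)) := by rw [hcalc]; exact hfinal
      _ = (r/(r+1)) * ((f a ^ (r+1) - f b ^ (r+1)) / (f a ^ r - f b ^ r)) := by
          rw [hA, hB]
  · intro hr1
    subst hr1
    have hAinv : A = (f a)⁻¹ := by rw [hA, Real.rpow_neg_one]
    have hBinv : B = (f b)⁻¹ := by rw [hB, Real.rpow_neg_one]
    set F : ℝ → ℝ := fun x => (1/k) * Real.log (u x) with hF
    have hFderiv : ∀ x ∈ Set.Icc a b, HasDerivAt F (g x) x := by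
      intro x hx
      have h1 : HasDerivAt Real.log (u x)⁻¹ (u x) := Real.hasDerivAt_log (hupos x hx).ne'
      have h2 := (h1.comp x (huderiv x)).const_mul (1/k)
      have h3 : (1/k) * ((u x)⁻¹ * k) = g x := by
        simp only [hg]
        rw [show (1 : ℝ)/(-1 : ℝ) = -1 by norm_num, Real.rpow_neg_one]
        field_simp
      rwa [h3] at h2
    have hcalc : ∫ x in a..b, g x = F b - F a := by
      apply intervalIntegral.integral_eq_sub_of_hasDerivAt
      · intro x hx
        rw [Set.uIcc_of_le hab.le] at hx
        exact hFderiv x hx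
      · exact hgint
    have hlogA : Real.log A = - Real.log (f a) := by rw [hAinv, Real.log_inv]
    have hlogB : Real.log B = - Real.log (f b) := by rw [hBinv, Real.log_inv]
    have h6 : f a - f b ≠ 0 := sub_ne_zero.mpr hne
    have hk2 : k = (f a - f b) / (f a * f b) / (b - a) := by
      rw [hk, hAinv, hBinv, inv_sub_inv hfb.ne' hfa.ne', mul_comm (f b)]
    have hval : F b - F a = (1/k) * (Real.log (f a) - Real.log (f b)) := by
      simp only [hF, hub, hua, hlogB, hlogA]; ring
    have hfinal : (1/(b-a)) * (F b - F a)
        = f a * f b * ((Real.log (f a) - Real.log (f b)) / (f a - f b)) := by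
      rw [hval, hk2]
      field_simp
    calc (1/(b-a)) * ∫ x in a..b, f x
        ≤ (1/(b-a)) * ∫ x in a..b, g x := by
          apply mul_le_mul_of_nonneg_left hle (by positivity)
      _ = f a * f b * ((Real.log (f a) - Real.log (f b)) / (f a - f b)) := by
          rw [hcalc]; exact hfinal
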